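/- arXiv:1504.06810 — 2 statements merged into one kernel-verified Lean document; each statement's English description precedes it below -/
import Mathlib

section
/- Let h : ℕ → ℝ and len : ℕ → ℝ be sequences with h 0 ≥ 0, len n > 0 for all n, and h (n+1) > h n + len n for all n (the DoS off/on transition times and durations). Let Δ* > 0. For 0 ≤ τ ≤ t define Ξ(τ,t) = (⋃ₙ [h n, h n + len n)) ∩ [τ,t], Ξ̄(τ,t) = (⋃ₙ [h n, h n + len n + Δ*)) ∩ [τ,t], Θ̄(τ,t) = [τ,t] \ Ξ̄(τ,t), and n(τ,t) = the (finite) cardinality of {n : h n ∈ [τ,t)}. Suppose there exist η ≥ 0, τ_f > Δ*, κ ≥ 0, τ_d > 1 such that for all 0 ≤ τ ≤ t: n(τ,t) ≤ η + (t-τ)/τ_f and the Lebesgue measure of Ξ(τ,t) is at most κ + (t-τ)/τ_d. If φ := 1/τ_d + Δ*/τ_f < 1, then for every τ ≥ 0 and every t > τ + (κ + (1+η)Δ*)/(1-φ), the set Θ̄(τ,t) has strictly positive Lebesgue measure. -/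
open MeasureTheory Set

/-- **Proposition 2 (Persistency-of-Communication).**
Under the DoS frequency and duration assumptions with
`φ = 1/τd + Δ/τf < 1`, the set `Θ̄(τ,t)` of time instants in `[τ,t]`
where communication (including the actuation delay `Δ`) is possible
has strictly positive Lebesgue measure for every
`t > τ + (κ + (1+η)Δ)/(1-φ)`. -/
theorem persistency_of_communication
    (h len : ℕ → ℝ) (Δ : ℝ)
    (h0 : 0 ≤ h 0) (hlen : ∀ n, 0 < len n)
    (hsep : ∀ n, h n + len n < h (n + 1))
    (hΔ : 0 < Δ)
    (η τf κ τd : ℝ)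
    (hη : 0 ≤ η) (hτf : Δ < τf) (hκ : 0 ≤ κ) (hτd : 1 < τd)
    (hfreq : ∀ τ t : ℝ, 0 ≤ τ → τ ≤ t →
      ((Set.ncard {n : ℕ | h n ∈ Set.Ico τ t} : ℝ) ≤ η + (t - τ) / τf))
    (hdur : ∀ τ t : ℝ, 0 ≤ τ → τ ≤ t →
      volume ((⋃ n, Set.Ico (h n) (h n + len n)) ∩ Set.Icc τ t)
        ≤ ENNReal.ofReal (κ + (t - τ) / τd))
    (hφ : 1 / τd + Δ / τf < 1) :
    ∀ τ t : ℝ, 0 ≤ τ →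
      t > τ + (κ + (1 + η) * Δ) * (1 - (1 / τd + Δ / τf))⁻¹ →
      0 < volume (Set.Icc τ t \
        ((⋃ n, Set.Ico (h n) (h n + len n + Δ)) ∩ Set.Icc τ t)) := by
  have hτf0 : 0 < τf := hΔ.trans hτf
  have hτd0 : 0 < τd := lt_trans one_pos hτd
  have hmono : StrictMono h := strictMono_nat_of_lt_succ (fun n => by
    have h1 := hsep n; have h2 := hlen n; linarith)
  intro τ t hτ0 ht
  have hφ0 : 0 < 1 - (1 / τd + Δ / τf) := by linarith
  have hC0 : 0 ≤ κ + (1 + η) * Δ := by nlinarith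
  have hinv0 : 0 ≤ (1 - (1 / τd + Δ / τf))⁻¹ := by positivity
  have hτt : τ < t := by nlinarith
  have hτt' : τ ≤ t := hτt.le
  have hkey : κ + (1 + η) * Δ < (t - τ) * (1 - (1 / τd + Δ / τf)) := by
    have h1 : (κ + (1 + η) * Δ) * (1 - (1 / τd + Δ / τf))⁻¹ < t - τ := by linarith
    have h2 := mul_lt_mul_of_pos_right h1 hφ0
    rwa [mul_assoc, inv_mul_cancel₀ hφ0.ne', mul_one] at h2
  -- finiteness of the set of DoS onsets in the window
  have hSfin : {n : ℕ | h n ∈ Set.Ico τ t}.Finite := by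
    by_contra hinf0
    have hinf : {n : ℕ | h n ∈ Set.Ico τ t}.Infinite := hinf0
    set R := η + (t - τ) / τf with hR
    obtain ⟨F, hFS, hFcard⟩ := hinf.exists_subset_card_eq (⌈R⌉₊ + 1)
    have hdiff : ({n : ℕ | h n ∈ Set.Ico τ t} \ Set.Iic (F.sup id)).Infinite :=
      hinf.diff (Set.finite_Iic _)
    obtain ⟨m, hmS, hmgt⟩ := hdiff.nonempty
    have hfin2 : {n : ℕ | h n ∈ Set.Ico τ (h m)}.Finite := by
      apply Set.Finite.subset (Set.finite_Iio m)
      intro n hn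
      exact hmono.lt_iff_lt.mp hn.2
    have hsub : (↑F : Set ℕ) ⊆ {n : ℕ | h n ∈ Set.Ico τ (h m)} := by
      intro n hn
      have hnS := hFS hn
      refine ⟨hnS.1, hmono ?_⟩
      have h3 : n ≤ F.sup id := Finset.le_sup (f := id) hn
      have h4 : ¬ m ≤ F.sup id := hmgt
      omega
    have hcard : (⌈R⌉₊ + 1 : ℕ) ≤ {n : ℕ | h n ∈ Set.Ico τ (h m)}.ncard := by
      rw [← hFcard, ← Set.ncard_coe_finset]
      exact Set.ncard_le_ncard hsub hfin2
    have hfr := hfreq τ (h m) hτ0 hmS.1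
    have hlast : ((⌈R⌉₊ + 1 : ℕ) : ℝ) ≤ R := by
      calc ((⌈R⌉₊ + 1 : ℕ) : ℝ) ≤ ({n : ℕ | h n ∈ Set.Ico τ (h m)}.ncard : ℝ) := by
            exact_mod_cast hcard
        _ ≤ η + (h m - τ) / τf := hfr
        _ ≤ R := by
            rw [hR]
            have hmt : h m < t := hmS.2
            gcongr <;> linarith
    have hceil : R ≤ (⌈R⌉₊ : ℝ) := Nat.le_ceil R
    push_cast at hlast
    linarith
  set Sf := hSfin.toFinset with hSf
  -- the straddling interval endpoint
  obtain ⟨c, hcτ, hstar, hcG⟩ :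
      ∃ c, τ ≤ c ∧ (∀ n, h n < τ → τ < h n + len n → h n + len n ≤ t → h n + len n = c) ∧
        (c = τ ∨ ∃ m, h m < τ ∧ τ < h m + len m ∧ h m + len m = c) := by
    by_cases hex : ∃ m, h m < τ ∧ τ < h m + len m ∧ h m + len m ≤ t
    · obtain ⟨m, hm1, hm2, hm3⟩ := hex
      refine ⟨h m + len m, hm2.le, ?_, Or.inr ⟨m, hm1, hm2, rfl⟩⟩
      intro n hn1 hn2 hn3
      rcases lt_trichotomy n m with hlt | heq | hgt
      · exfalso
        have : h n + len n < h m := (hsep n).trans_le (hmono.monotone (by omega))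
        linarith
      · rw [heq]
      · exfalso
        have : h m + len m < h n := (hsep m).trans_le (hmono.monotone (by omega))
        linarith
    · push_neg at hex
      refine ⟨τ, le_refl τ, ?_, Or.inl rfl⟩
      intro n hn1 hn2 hn3
      exact absurd hn3 (not_le.mpr (hex n hn1 hn2))
  -- the covering
  have hcover : (⋃ n, Set.Ico (h n) (h n + len n + Δ)) ∩ Set.Icc τ t ⊆
      (((⋃ n, Set.Ico (h n) (h n + len n)) ∩ Set.Icc τ t) ∪
        (⋃ n ∈ Sf, Set.Ico (h n + len n) (h n + len n + Δ))) ∪ Set.Ico c (c + Δ) := by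
    rintro x ⟨hx1, hxτ, hxt⟩
    simp only [Set.mem_iUnion, Set.mem_Ico] at hx1
    obtain ⟨n, hxn1, hxn2⟩ := hx1
    by_cases hxe : x < h n + len n
    · exact Or.inl (Or.inl ⟨Set.mem_iUnion.mpr ⟨n, hxn1, hxe⟩, hxτ, hxt⟩)
    push_neg at hxe
    have hent : h n + len n ≤ t := hxe.trans hxt
    by_cases hnτ : τ ≤ h n
    · have hnS : n ∈ Sf := by
        rw [hSf, Set.Finite.mem_toFinset]
        exact ⟨hnτ, lt_of_lt_of_le (by linarith [hlen n]) hent⟩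
      exact Or.inl (Or.inr (Set.mem_biUnion hnS ⟨hxe, hxn2⟩))
    · push_neg at hnτ
      by_cases henτ : τ < h n + len n
      · have hc := hstar n hnτ henτ hent
        exact Or.inr ⟨by linarith, by linarith⟩
      · push_neg at henτ
        have hxτΔ : x < τ + Δ := by linarith
        rcases hcG with rfl | ⟨m, hm1, hm2, hm3⟩
        · exact Or.inr ⟨hxτ, hxτΔ⟩
        · by_cases hxc : x < c
          · exact Or.inl (Or.inl
              ⟨Set.mem_iUnion.mpr ⟨m, by linarith, by linarith⟩, hxτ, hxt⟩)
          · push_neg at hxc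
            exact Or.inr ⟨hxc, by linarith⟩
  have hmeasB : MeasurableSet ((⋃ n, Set.Ico (h n) (h n + len n + Δ)) ∩ Set.Icc τ t) :=
    (MeasurableSet.iUnion fun n => measurableSet_Ico).inter measurableSet_Icc
  -- measure bounds
  have hvol1 := hdur τ t hτ0 hτt'
  have hvol2 : volume (⋃ n ∈ Sf, Set.Ico (h n + len n) (h n + len n + Δ))
      ≤ ENNReal.ofReal ((Sf.card : ℝ) * Δ) := by
    calc volume (⋃ n ∈ Sf, Set.Ico (h n + len n) (h n + len n + Δ))
        ≤ ∑ n ∈ Sf, volume (Set.Ico (h n + len n) (h n + len n + Δ)) :=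
          measure_biUnion_finset_le _ _
      _ = ∑ n ∈ Sf, ENNReal.ofReal Δ := by
          refine Finset.sum_congr rfl fun n _ => ?_
          rw [Real.volume_Ico]
          congr 1
          ring
      _ = ENNReal.ofReal ((Sf.card : ℝ) * Δ) := by
          rw [Finset.sum_const, nsmul_eq_mul, ENNReal.ofReal_mul (by positivity),
            ENNReal.ofReal_natCast]
  have hvol3 : volume (Set.Ico c (c + Δ)) = ENNReal.ofReal Δ := by
    rw [Real.volume_Ico]
    congr 1
    ring
  have hcard : (Sf.card : ℝ) ≤ η + (t - τ) / τf := by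
    have hf := hfreq τ t hτ0 hτt'
    rwa [Set.ncard_eq_toFinset_card _ hSfin] at hf
  have hreal : ((κ + (t - τ) / τd) + (Sf.card : ℝ) * Δ) + Δ < t - τ := by
    have h1 : (Sf.card : ℝ) * Δ ≤ (η + (t - τ) / τf) * Δ :=
      mul_le_mul_of_nonneg_right hcard hΔ.le
    have e1 : (η + (t - τ) / τf) * Δ = η * Δ + (t - τ) / τf * Δ := by ring
    have e2 : (t - τ) * (1 - (1 / τd + Δ / τf)) =
        (t - τ) - (t - τ) / τd - (t - τ) / τf * Δ := by ring
    linarith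
  have hBle : volume ((⋃ n, Set.Ico (h n) (h n + len n + Δ)) ∩ Set.Icc τ t)
      ≤ ENNReal.ofReal (((κ + (t - τ) / τd) + (Sf.card : ℝ) * Δ) + Δ) := by
    calc volume ((⋃ n, Set.Ico (h n) (h n + len n + Δ)) ∩ Set.Icc τ t)
        ≤ volume ((((⋃ n, Set.Ico (h n) (h n + len n)) ∩ Set.Icc τ t) ∪
            (⋃ n ∈ Sf, Set.Ico (h n + len n) (h n + len n + Δ))) ∪ Set.Ico c (c + Δ)) :=
          measure_mono hcover
      _ ≤ (volume ((⋃ n, Set.Ico (h n) (h n + len n)) ∩ Set.Icc τ t) +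
            volume (⋃ n ∈ Sf, Set.Ico (h n + len n) (h n + len n + Δ))) +
            volume (Set.Ico c (c + Δ)) :=
          le_trans (measure_union_le _ _) (by gcongr; exact measure_union_le _ _)
      _ ≤ (ENNReal.ofReal (κ + (t - τ) / τd) + ENNReal.ofReal ((Sf.card : ℝ) * Δ)) +
            ENNReal.ofReal Δ := by
          gcongr
          exact hvol3.le
      _ = ENNReal.ofReal (((κ + (t - τ) / τd) + (Sf.card : ℝ) * Δ) + Δ) := by
          have e1 : (0:ℝ) ≤ κ + (t - τ) / τd := by
            have := div_nonneg (show (0:ℝ) ≤ t - τ by linarith) hτd0.le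
            linarith
          have e2 : (0:ℝ) ≤ (Sf.card : ℝ) * Δ := mul_nonneg (Nat.cast_nonneg _) hΔ.le
          rw [← ENNReal.ofReal_add e1 e2, ← ENNReal.ofReal_add (by linarith) hΔ.le]
  have hBlt : volume ((⋃ n, Set.Ico (h n) (h n + len n + Δ)) ∩ Set.Icc τ t)
      < volume (Set.Icc τ t) := by
    rw [Real.volume_Icc]
    exact lt_of_le_of_lt hBle ((ENNReal.ofReal_lt_ofReal_iff (by linarith)).mpr hreal)
  have hBfin : volume ((⋃ n, Set.Ico (h n) (h n + len n + Δ)) ∩ Set.Icc τ t) ≠ ⊤ :=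
    (hBle.trans_lt ENNReal.ofReal_lt_top).ne
  rw [measure_diff Set.inter_subset_right hmeasB.nullMeasurableSet hBfin]
  exact tsub_pos_of_lt hBlt
end

section
/- Let h : ℕ → ℝ and len : ℕ → ℝ be sequences with h 0 ≥ 0, len n > 0 for all n, and h (n+1) > h n + len n for all n. Let Δ* > 0, and define for 0 ≤ τ ≤ t the sets Ξ(τ,t) = (⋃ₙ [h n, h n + len n)) ∩ [τ,t] and Ξ̄(τ,t) = (⋃ₙ [h n, h n + len n + Δ*)) ∩ [τ,t], and the (finite) count n(τ,t) = #{n : h n ∈ [τ,t)}. Suppose there exist η ≥ 0, τ_f > Δ*, κ ≥ 0, τ_d > 1 such that n(τ,t) ≤ η + (t-τ)/τ_f and the Lebesgue measure of Ξ(τ,t) is at most κ + (t-τ)/τ_d, for all 0 ≤ τ ≤ t. Then for all 0 ≤ τ ≤ t the Lebesgue measure of Ξ̄(τ,t) is at most κ + (t-τ)/τ_d + (η + (t-τ)/τ_f + 1)·Δ*. -/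
open MeasureTheory Set

/-- **Chained inequality (19).**
Combining the structural bound on the extended DoS set with the
DoS-frequency and DoS-duration assumptions:
`|Ξ̄(τ,t)| ≤ κ + (t-τ)/τd + (η + (t-τ)/τf + 1)·Δ`. -/
theorem extended_DoS_measure_assumption_bound
    (h len : ℕ → ℝ) (Δ : ℝ)
    (h0 : 0 ≤ h 0) (hlen : ∀ n, 0 < len n)
    (hsep : ∀ n, h n + len n < h (n + 1))
    (hΔ : 0 < Δ)
    (η τf κ τd : ℝ)
    (hη : 0 ≤ η) (hτf : Δ < τf) (hκ : 0 ≤ κ) (hτd : 1 < τd)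
    (hfreq : ∀ τ t : ℝ, 0 ≤ τ → τ ≤ t →
      ((Set.ncard {n : ℕ | h n ∈ Set.Ico τ t} : ℝ) ≤ η + (t - τ) / τf))
    (hdur : ∀ τ t : ℝ, 0 ≤ τ → τ ≤ t →
      volume ((⋃ n, Set.Ico (h n) (h n + len n)) ∩ Set.Icc τ t)
        ≤ ENNReal.ofReal (κ + (t - τ) / τd)) :
    ∀ τ t : ℝ, 0 ≤ τ → τ ≤ t →
      volume ((⋃ n, Set.Ico (h n) (h n + len n + Δ)) ∩ Set.Icc τ t)
        ≤ ENNReal.ofReal (κ + (t - τ) / τd + (η + (t - τ) / τf + 1) * Δ) := by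
  intro τ t hτ0 hτt
  have hmono : StrictMono h :=
    strictMono_nat_of_lt_succ fun n =>
      lt_trans (lt_add_of_pos_right _ (hlen n)) (hsep n)
  have hpos : ∀ n, 0 ≤ h n := fun n => le_trans h0 (hmono.monotone (Nat.zero_le n))
  have hτfpos : 0 < τf := hΔ.trans hτf
  have hgrow : ∀ k : ℕ, (k : ℝ) ≤ η + h k / τf := by
    intro k
    have hs : {n : ℕ | h n ∈ Set.Ico (0:ℝ) (h k)} = Set.Iio k := by
      ext n
      simp only [Set.mem_setOf_eq, Set.mem_Ico, Set.mem_Iio, hpos n, true_and]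
      exact hmono.lt_iff_lt
    have h2 := hfreq 0 (h k) le_rfl (hpos k)
    rw [hs] at h2
    simpa [Set.ncard_eq_toFinset_card'] using h2
  obtain ⟨N, hN⟩ : ∃ N, t ≤ h N := by
    obtain ⟨k, hk⟩ := exists_nat_ge (η + t / τf)
    refine ⟨k, ?_⟩
    have h3 : t / τf ≤ h k / τf := by linarith [hgrow k]
    have h4 : t / τf * τf ≤ h k / τf * τf := mul_le_mul_of_nonneg_right h3 hτfpos.le
    rwa [div_mul_cancel₀ _ hτfpos.ne', div_mul_cancel₀ _ hτfpos.ne'] at h4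
  -- the finite set of relevant attack indices inside [τ, t)
  set F : Finset ℕ := (Finset.Iio N).filter (fun n => τ ≤ h n ∧ h n < t) with hF
  have hFset : {n : ℕ | h n ∈ Set.Ico τ t} = ↑F := by
    ext n
    simp only [Set.mem_setOf_eq, Set.mem_Ico, hF, Finset.coe_filter, Finset.mem_Iio]
    constructor
    · rintro ⟨h1, h2⟩
      exact ⟨hmono.lt_iff_lt.mp (h2.trans_le hN), h1, h2⟩
    · rintro ⟨_, h1, h2⟩
      exact ⟨h1, h2⟩
  have hcard : (F.card : ℝ) ≤ η + (t - τ) / τf := by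
    have := hfreq τ t hτ0 hτt
    rwa [hFset, Set.ncard_coe_finset] at this
  -- the "straddling extension" interval start point
  obtain ⟨c, hcτ, hcprop⟩ : ∃ c : ℝ, τ ≤ c ∧ ∀ n x, h n < τ → τ ≤ x → x ≤ t →
      x < h n + len n + Δ →
      x ∈ ((⋃ m, Set.Ico (h m) (h m + len m)) ∩ Set.Icc τ t) ∪ Set.Ico c (c + Δ) := by
    by_cases hstr : ∃ n₀, h n₀ < τ ∧ τ < h n₀ + len n₀
    · obtain ⟨n₀, hn₀1, hn₀2⟩ := hstr
      refine ⟨h n₀ + len n₀, hn₀2.le, ?_⟩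
      intro n x hn hx1 hx2 hx3
      by_cases hx : x < h n₀ + len n₀
      · exact Or.inl ⟨Set.mem_iUnion.2 ⟨n₀, (hn₀1.trans_le hx1).le, hx⟩, hx1, hx2⟩
      · push_neg at hx
        refine Or.inr ⟨hx, ?_⟩
        by_cases hss : τ < h n + len n
        · have hne : n = n₀ := by
            rcases lt_trichotomy n n₀ with hlt | he | hgt
            · exfalso
              have : h (n + 1) ≤ h n₀ := hmono.monotone hlt
              linarith [hsep n]
            · exact he
            · exfalso
              have : h (n₀ + 1) ≤ h n := hmono.monotone hgt
              linarith [hsep n₀]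
          subst hne; linarith
        · push_neg at hss
          linarith
    · push_neg at hstr
      exact ⟨τ, le_rfl, fun n x hn hx1 hx2 hx3 =>
        Or.inr ⟨hx1, by linarith [hstr n hn]⟩⟩
  -- main set inclusion
  have hsub : (⋃ n, Set.Ico (h n) (h n + len n + Δ)) ∩ Set.Icc τ t ⊆
      (((⋃ m, Set.Ico (h m) (h m + len m)) ∩ Set.Icc τ t) ∪ Set.Ico c (c + Δ)) ∪
        ({t} ∪ ⋃ n ∈ F, Set.Ico (h n + len n) (h n + len n + Δ)) := by
    rintro x ⟨hx1, hxτ, hxt⟩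
    obtain ⟨n, hn1, hn2⟩ := Set.mem_iUnion.1 hx1
    by_cases hcase : h n < τ
    · exact Or.inl (hcprop n x hcase hxτ hxt hn2)
    · push_neg at hcase
      by_cases hcase2 : h n < t
      · have hnF : n ∈ F := by
          simp only [hF, Finset.mem_filter, Finset.mem_Iio]
          exact ⟨hmono.lt_iff_lt.mp (hcase2.trans_le hN), hcase, hcase2⟩
        by_cases hx3 : x < h n + len n
        · exact Or.inl (Or.inl ⟨Set.mem_iUnion.2 ⟨n, hn1, hx3⟩, hxτ, hxt⟩)
        · push_neg at hx3
          exact Or.inr (Or.inr (Set.mem_biUnion hnF ⟨hx3, hn2⟩))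
      · push_neg at hcase2
        have hxeq : x = t := le_antisymm hxt (hcase2.trans hn1)
        exact Or.inr (Or.inl (by simp [hxeq]))
  -- measure computation
  have hA := hdur τ t hτ0 hτt
  have hB : volume (Set.Ico c (c + Δ)) = ENNReal.ofReal Δ := by
    rw [Real.volume_Ico]; ring_nf
  have hC : volume (⋃ n ∈ F, Set.Ico (h n + len n) (h n + len n + Δ))
      ≤ (F.card : ENNReal) * ENNReal.ofReal Δ := by
    refine le_trans (measure_biUnion_finset_le F _) ?_
    have : ∀ n ∈ F, volume (Set.Ico (h n + len n) (h n + len n + Δ))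
        = ENNReal.ofReal Δ := by
      intro n _; rw [Real.volume_Ico]; ring_nf
    rw [Finset.sum_congr rfl this, Finset.sum_const, nsmul_eq_mul]
  calc volume ((⋃ n, Set.Ico (h n) (h n + len n + Δ)) ∩ Set.Icc τ t)
      ≤ volume ((((⋃ m, Set.Ico (h m) (h m + len m)) ∩ Set.Icc τ t) ∪ Set.Ico c (c + Δ)) ∪
        ({t} ∪ ⋃ n ∈ F, Set.Ico (h n + len n) (h n + len n + Δ))) := measure_mono hsub
    _ ≤ volume (((⋃ m, Set.Ico (h m) (h m + len m)) ∩ Set.Icc τ t) ∪ Set.Ico c (c + Δ)) +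
        volume ({t} ∪ ⋃ n ∈ F, Set.Ico (h n + len n) (h n + len n + Δ)) :=
        measure_union_le _ _
    _ ≤ (volume ((⋃ m, Set.Ico (h m) (h m + len m)) ∩ Set.Icc τ t) +
          volume (Set.Ico c (c + Δ))) +
        (volume ({t} : Set ℝ) +
          volume (⋃ n ∈ F, Set.Ico (h n + len n) (h n + len n + Δ))) :=
        add_le_add (measure_union_le _ _) (measure_union_le _ _)
    _ ≤ (ENNReal.ofReal (κ + (t - τ) / τd) + ENNReal.ofReal Δ) +
        (0 + (F.card : ENNReal) * ENNReal.ofReal Δ) := by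
        refine add_le_add (add_le_add hA hB.le) (add_le_add ?_ hC)
        simp [Real.volume_singleton]
    _ = ENNReal.ofReal ((κ + (t - τ) / τd) + Δ + (F.card : ℝ) * Δ) := by
        have hnn : (0:ℝ) ≤ κ + (t - τ) / τd :=
          add_nonneg hκ (div_nonneg (sub_nonneg.mpr hτt) (by linarith))
        rw [zero_add, ← ENNReal.ofReal_natCast F.card,
          ← ENNReal.ofReal_mul (Nat.cast_nonneg _),
          ← ENNReal.ofReal_add hnn hΔ.le,
          ← ENNReal.ofReal_add (add_nonneg hnn hΔ.le) (by positivity)]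
    _ ≤ ENNReal.ofReal (κ + (t - τ) / τd + (η + (t - τ) / τf + 1) * Δ) := by
        refine ENNReal.ofReal_le_ofReal ?_
        nlinarith [hcard, hΔ.le, mul_le_mul_of_nonneg_right hcard hΔ.le]
end
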